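/- Let λ ∈ ℂ with λ ∉ ℕ and consider the formal power series equation corresponding to h h' = (λξ^{-1} + d₁ + d₂ξ) h + (−λξ^{-1} + d₃ + d₄ξ), h(0) = 1: there exists a unique formal power series solution h̃ = 1 + ∑_{k≥1} h̃_k ξ^k, and moreover this series has positive radius of convergence, giving a unique solution analytic at ξ = 0 with h(0) = 1. -/

import Mathlib

noncomputable def odeC (lam d₁ d₂ d₃ d₄ : ℂ) : ℕ → ℂ
  | 0 => 1
  | (k+1) =>
      (((k : ℂ) + 1) - lam)⁻¹ *
        (d₁ * odeC lam d₁ d₂ d₃ d₄ k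
          + (if k = 0 then d₃ else d₂ * odeC lam d₁ d₂ d₃ d₄ (k-1))
          + (if k = 1 then d₄ else 0)
          - ∑ j ∈ (Finset.range k).attach,
              ((k - (j : ℕ) : ℕ) : ℂ) * odeC lam d₁ d₂ d₃ d₄ ((j : ℕ) + 1)
                * odeC lam d₁ d₂ d₃ d₄ (k - (j : ℕ)))
  decreasing_by
  · omega
  · omega
  · have := j.2; simp only [Finset.mem_range] at this; omega
  · omega

lemma odeC_succ (lam d₁ d₂ d₃ d₄ : ℂ) (k : ℕ) : odeC lam d₁ d₂ d₃ d₄ (k+1) =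
      (((k : ℂ) + 1) - lam)⁻¹ *
        (d₁ * odeC lam d₁ d₂ d₃ d₄ k
          + (if k = 0 then d₃ else d₂ * odeC lam d₁ d₂ d₃ d₄ (k-1))
          + (if k = 1 then d₄ else 0)
          - ∑ j ∈ Finset.range k,
              ((k - j : ℕ) : ℂ) * odeC lam d₁ d₂ d₃ d₄ (j + 1)
                * odeC lam d₁ d₂ d₃ d₄ (k - j)) := by
  rw [odeC, Finset.sum_attach (Finset.range k)
    (fun j => ((k - j : ℕ) : ℂ) * odeC lam d₁ d₂ d₃ d₄ (j + 1) * odeC lam d₁ d₂ d₃ d₄ (k - j))]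

lemma odeC_conv (lam d₁ d₂ d₃ d₄ : ℂ) (hlam : ∀ n : ℕ, lam ≠ (n : ℂ)) (n : ℕ) :
    ∑ p ∈ Finset.HasAntidiagonal.antidiagonal n,
        odeC lam d₁ d₂ d₃ d₄ p.1 * (((p.2 : ℂ) + 1) * odeC lam d₁ d₂ d₃ d₄ (p.2 + 1))
      = lam * odeC lam d₁ d₂ d₃ d₄ (n+1) + d₁ * odeC lam d₁ d₂ d₃ d₄ n
        + (if n = 0 then d₃ else d₂ * odeC lam d₁ d₂ d₃ d₄ (n-1))
        + (if n = 1 then d₄ else 0) := by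
  set c := odeC lam d₁ d₂ d₃ d₄ with hc
  have hne : ((n : ℂ) + 1) - lam ≠ 0 := by
    rw [sub_ne_zero]
    intro h
    exact hlam (n+1) (by push_cast; exact h.symm)
  have hdef : (((n : ℂ) + 1) - lam) * c (n+1) =
      d₁ * c n + (if n = 0 then d₃ else d₂ * c (n-1)) + (if n = 1 then d₄ else 0)
        - ∑ j ∈ Finset.range n, ((n - j : ℕ) : ℂ) * c (j + 1) * c (n - j) := by
    rw [hc, odeC_succ, ← mul_assoc, mul_inv_cancel₀ hne, one_mul]
  rw [Finset.Nat.sum_antidiagonal_eq_sum_range_succ_mk, Finset.sum_range_succ']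
  have h0 : c 0 = 1 := by rw [hc, odeC]
  have hterm : ∀ i ∈ Finset.range n,
      c (i+1) * (((n - (i+1) : ℕ) : ℂ) + 1) * c ((n - (i+1)) + 1)
      = ((n - i : ℕ) : ℂ) * c (i + 1) * c (n - i) := by
    intro i hi
    rw [Finset.mem_range] at hi
    have h1 : n - (i+1) + 1 = n - i := by omega
    have h2 : ((n - (i+1) : ℕ) : ℂ) + 1 = ((n - i : ℕ) : ℂ) := by
      have h3 : n - i = (n - (i+1)) + 1 := by omega
      rw [h3]; push_cast; ring
    rw [h1, h2]; ring
  have hsum : ∑ i ∈ Finset.range n,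
      c (i+1) * ((((n - (i+1) : ℕ)) : ℂ) + 1) * c ((n - (i+1)) + 1)
      = ∑ j ∈ Finset.range n, ((n - j : ℕ) : ℂ) * c (j + 1) * c (n - j) :=
    Finset.sum_congr rfl hterm
  simp only [Nat.sub_zero, h0, one_mul, ← mul_assoc]
  rw [hsum]
  linear_combination hdef

lemma delta_sep (lam : ℂ) (hlam : ∀ n : ℕ, lam ≠ (n : ℂ)) :
    ∃ δ : ℝ, 0 < δ ∧ δ ≤ 1 ∧ ∀ k : ℕ, 1 ≤ k → δ * k ≤ ‖(k : ℂ) - lam‖ := by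
  set N : ℕ := ⌈2 * ‖lam‖⌉₊ + 1 with hN
  have hFne : (Finset.Icc 1 N).Nonempty := ⟨1, by simp [hN]⟩
  set δ₀ : ℝ := (Finset.Icc 1 N).inf' hFne (fun k => ‖(k : ℂ) - lam‖ / k) with hδ₀
  refine ⟨min δ₀ (1/2), ?_, ?_, ?_⟩
  · apply lt_min _ (by norm_num)
    rw [hδ₀, Finset.lt_inf'_iff]
    intro k hk
    rw [Finset.mem_Icc] at hk
    have h1 : (0:ℝ) < k := by exact_mod_cast hk.1
    have h2 : (0:ℝ) < ‖(k : ℂ) - lam‖ := by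
      rw [norm_pos_iff, sub_ne_zero]
      exact fun h => hlam k h.symm
    positivity
  · exact (min_le_right _ _).trans (by norm_num)
  · intro k hk
    rcases le_or_gt k N with hkN | hkN
    · have h1 : min δ₀ (1/2) ≤ ‖(k : ℂ) - lam‖ / k :=
        (min_le_left _ _).trans (Finset.inf'_le _ (by rw [Finset.mem_Icc]; exact ⟨hk, hkN⟩))
      have hkpos : (0:ℝ) < k := by exact_mod_cast hk
      calc min δ₀ (1/2) * k ≤ (‖(k : ℂ) - lam‖ / k) * k := by
            apply mul_le_mul_of_nonneg_right h1 hkpos.le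
        _ = ‖(k : ℂ) - lam‖ := by field_simp
    · have hk2 : 2 * ‖lam‖ ≤ (k : ℝ) := by
        have : (2 * ‖lam‖) ≤ (⌈2 * ‖lam‖⌉₊ : ℝ) := Nat.le_ceil _
        have hNk : (N : ℝ) ≤ k := by exact_mod_cast hkN.le
        have : ((⌈2 * ‖lam‖⌉₊ : ℕ) : ℝ) ≤ N := by rw [hN]; push_cast; linarith
        linarith [Nat.le_ceil (2 * ‖lam‖)]
      have h1 : (k : ℝ) - ‖lam‖ ≤ ‖(k : ℂ) - lam‖ := by
        have := norm_sub_norm_le ((k : ℂ)) lam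
        simpa using this
      have h2 : min δ₀ (1/2) * k ≤ (1/2) * k := by
        apply mul_le_mul_of_nonneg_right (min_le_right _ _) (by positivity)
      have hnn : (0:ℝ) ≤ ‖lam‖ := norm_nonneg _
      nlinarith
  
lemma sum_inv_sq_le' (n : ℕ) (hn : 1 ≤ n) :
    ∑ i ∈ Finset.range n, (1:ℝ)/((i:ℝ)+1)^2 ≤ 2 - 1/(n:ℝ) := by
  induction n with
  | zero => omega
  | succ n ih =>
    rcases Nat.eq_zero_or_pos n with h0 | h0
    · subst h0; norm_num [Finset.sum_range_one]
    · have h1 : (0:ℝ) < (n:ℝ) := by exact_mod_cast h0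
      rw [Finset.sum_range_succ]
      have key : 1/((n:ℝ)+1)^2 ≤ 1/(n:ℝ) - 1/((n:ℝ)+1) := by
        rw [div_sub_div _ _ (ne_of_gt h1) (by positivity),
          div_le_div_iff₀ (by positivity) (by positivity)]
        nlinarith
      push_cast
      linarith [ih h0]

lemma sum_inv_sq_le (n : ℕ) : ∑ i ∈ Finset.range n, (1:ℝ)/((i:ℝ)+1)^2 ≤ 2 := by
  rcases Nat.eq_zero_or_pos n with h0 | h0
  · subst h0; simp
  · have h1 : (0:ℝ) < (n:ℝ) := by exact_mod_cast h0
    have h2 : (0:ℝ) ≤ 1/(n:ℝ) := by positivity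
    linarith [sum_inv_sq_le' n h0]

lemma sum_inv_sq_reflect (k : ℕ) :
    ∑ j ∈ Finset.range k, (1:ℝ)/(((k-j : ℕ):ℝ))^2 ≤ 2 := by
  have hrefl := Finset.sum_range_reflect (fun i => (1:ℝ)/((i:ℝ)+1)^2) k
  have hcongr : ∑ j ∈ Finset.range k, (1:ℝ)/(((k - 1 - j : ℕ):ℝ)+1)^2
      = ∑ j ∈ Finset.range k, (1:ℝ)/(((k-j : ℕ):ℝ))^2 := by
    apply Finset.sum_congr rfl
    intro j hj
    rw [Finset.mem_range] at hj
    have : (k - 1 - j) + 1 = k - j := by omega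
    rw [← this]
    push_cast
    ring_nf
  rw [← hcongr]
  calc ∑ j ∈ Finset.range k, (1:ℝ)/(((k - 1 - j : ℕ):ℝ)+1)^2
      = ∑ i ∈ Finset.range k, (1:ℝ)/((i:ℝ)+1)^2 := hrefl
    _ ≤ 2 := sum_inv_sq_le k

lemma tbound (a b : ℕ) (ha : 1 ≤ a) (hb : 1 ≤ b) :
    ((b:ℝ))/((a:ℝ)^2*(b:ℝ)^2) ≤ (2/((a:ℝ)+(b:ℝ)))*(1/(a:ℝ)^2 + 1/(b:ℝ)^2) := by
  have hx : (1:ℝ) ≤ a := by exact_mod_cast ha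
  have hy : (1:ℝ) ≤ b := by exact_mod_cast hb
  set x := (a:ℝ); set y := (b:ℝ)
  have hx0 : (0:ℝ) < x := by linarith
  have hy0 : (0:ℝ) < y := by linarith
  have hrhs : (2/(x+y))*(1/x^2 + 1/y^2) = 2*(x^2+y^2)/((x+y)*(x^2*y^2)) := by
    field_simp; ring
  rw [hrhs, div_le_div_iff₀ (by positivity) (by positivity)]
  have hfac : (0:ℝ) ≤ 2*x^2 + y^2 - x*y := by nlinarith [sq_nonneg (x - y)]
  nlinarith [mul_nonneg (mul_nonneg (sq_nonneg x) (sq_nonneg y)) hfac]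


lemma bigstep (D1 D2 δ M E r N : ℝ) (hδ : 0 < δ) (hM : 0 < M) (hM32 : 32*M = δ)
    (hE : 1 ≤ E) (hr : 1 ≤ r) (hN : 2 ≤ N) (hD1 : 0 ≤ D1) (hD2 : 0 ≤ D2)
    (h1 : 8*D1 ≤ δ*r) (h2 : 9*D2 ≤ δ*r) :
    D1*(M*(E*r)/N^2) + D2*(M*E/(N-1)^2) + 8*(M*M)*(E*r^2)/(N+1)
      ≤ δ*(N+1)*(M*(E*r^2)/(N+1)^2) := by
  have hE0 : (0:ℝ) < E := by linarith
  have hr0 : (0:ℝ) < r := by linarith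
  have hN0 : (0:ℝ) < N := by linarith
  have hN1 : (0:ℝ) < N + 1 := by linarith
  have hNm : (1:ℝ) ≤ N - 1 := by linarith
  have p1 : D1*(M*(E*r)/N^2) ≤ δ*M*E*r^2/(3*(N+1)) := by
    have e1 : D1*(M*(E*r)/N^2) = (D1*M*E*r)/N^2 := by ring
    rw [e1, div_le_div_iff₀ (by positivity) (by positivity)]
    calc D1*M*E*r*(3*(N+1)) ≤ (δ*r/8)*M*E*r*(3*N^2) := by
          apply mul_le_mul _ (by nlinarith) (by positivity) (by positivity)
          gcongr
          linarith
      _ = (3/8)*(δ*M*E*r^2*N^2) := by ring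
      _ ≤ δ*M*E*r^2*N^2 := by nlinarith [mul_pos (mul_pos (mul_pos (mul_pos hδ hM) hE0) (mul_pos hr0 hr0)) (mul_pos hN0 hN0)]
  have p2 : D2*(M*E/(N-1)^2) ≤ δ*M*E*r^2/(3*(N+1)) := by
    have e2 : D2*(M*E/(N-1)^2) = (D2*M*E)/(N-1)^2 := by ring
    rw [e2, div_le_div_iff₀ (by positivity) (by positivity)]
    have hr2 : 9*D2 ≤ δ*r^2 := by nlinarith
    calc D2*M*E*(3*(N+1)) ≤ (δ*r^2/9)*M*E*(9*(N-1)^2) := by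
          apply mul_le_mul _ (by nlinarith [mul_nonneg (sub_nonneg.mpr hN) (by linarith : (0:ℝ) ≤ 3*N-1)]) (by positivity) (by positivity)
          gcongr
          linarith
      _ = δ*M*E*r^2*(N-1)^2 := by ring
  have p3 : 8*(M*M)*(E*r^2)/(N+1) ≤ δ*M*E*r^2/(3*(N+1)) := by
    rw [div_le_div_iff₀ (by positivity) (by positivity)]
    nlinarith [mul_pos (mul_pos (mul_pos hM hM) (mul_pos hE0 (mul_pos hr0 hr0))) hN1]
  have etarget : δ*(N+1)*(M*(E*r^2)/(N+1)^2) = δ*M*E*r^2/(N+1) := by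
    field_simp
  have esum : δ*M*E*r^2/(3*(N+1))*3 = δ*M*E*r^2/(N+1) := by
    field_simp
  rw [etarget]
  linarith


set_option maxHeartbeats 2000000 in
lemma odeC_norm_bound (lam d₁ d₂ d₃ d₄ : ℂ) (hlam : ∀ n : ℕ, lam ≠ (n : ℂ)) :
    ∃ M r : ℝ, 0 < M ∧ M ≤ 1 ∧ 1 ≤ r ∧
      ∀ k : ℕ, 1 ≤ k → ‖odeC lam d₁ d₂ d₃ d₄ k‖ ≤ M * r^k / (k:ℝ)^2 := by
  obtain ⟨δ, hδ0, hδ1, hδ⟩ := delta_sep lam hlam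
  set c := odeC lam d₁ d₂ d₃ d₄ with hc
  obtain ⟨M, hM⟩ : ∃ M : ℝ, M = δ/32 := ⟨_, rfl⟩
  obtain ⟨r, hr⟩ : ∃ r : ℝ,
      r = 1 + (‖d₁‖+‖d₃‖)/(δ*M) + 8*‖d₁‖/δ + 9*‖d₂‖/δ + 8*(‖d₂‖+‖d₄‖)/(δ*M) := ⟨_, rfl⟩
  have hM0 : 0 < M := by rw [hM]; positivity
  have hM1 : M ≤ 1 := by rw [hM]; linarith
  have hMδ : 32 * M = δ := by rw [hM]; ring
  have t1 : 0 ≤ (‖d₁‖+‖d₃‖)/(δ*M) := by positivity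
  have t2 : 0 ≤ 8*‖d₁‖/δ := by positivity
  have t3 : 0 ≤ 9*‖d₂‖/δ := by positivity
  have t4 : 0 ≤ 8*(‖d₂‖+‖d₄‖)/(δ*M) := by positivity
  have hr1 : 1 ≤ r := by rw [hr]; linarith
  have hr0 : 0 < r := by linarith
  have hrA : ‖d₁‖+‖d₃‖ ≤ δ*M*r := by
    have h : (‖d₁‖+‖d₃‖)/(δ*M) ≤ r := by rw [hr]; linarith
    calc ‖d₁‖+‖d₃‖ = ((‖d₁‖+‖d₃‖)/(δ*M))*(δ*M) := by field_simp
      _ ≤ r*(δ*M) := by apply mul_le_mul_of_nonneg_right h (by positivity)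
      _ = δ*M*r := by ring
  have hrB : 8*‖d₁‖ ≤ δ*r := by
    have h : 8*‖d₁‖/δ ≤ r := by rw [hr]; linarith
    calc 8*‖d₁‖ = (8*‖d₁‖/δ)*δ := by field_simp
      _ ≤ r*δ := by apply mul_le_mul_of_nonneg_right h hδ0.le
      _ = δ*r := by ring
  have hrC : 9*‖d₂‖ ≤ δ*r := by
    have h : 9*‖d₂‖/δ ≤ r := by rw [hr]; linarith
    calc 9*‖d₂‖ = (9*‖d₂‖/δ)*δ := by field_simp
      _ ≤ r*δ := by apply mul_le_mul_of_nonneg_right h hδ0.le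
      _ = δ*r := by ring
  have hrD : 8*(‖d₂‖+‖d₄‖) ≤ δ*M*r := by
    have h : 8*(‖d₂‖+‖d₄‖)/(δ*M) ≤ r := by rw [hr]; linarith
    calc 8*(‖d₂‖+‖d₄‖) = (8*(‖d₂‖+‖d₄‖)/(δ*M))*(δ*M) := by field_simp
      _ ≤ r*(δ*M) := by apply mul_le_mul_of_nonneg_right h (by positivity)
      _ = δ*M*r := by ring
  clear hr hM t1 t2 t3 t4
  refine ⟨M, r, hM0, hM1, hr1, ?_⟩
  intro k
  induction k using Nat.strong_induction_on with
  | _ k ih =>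
  intro hk
  obtain ⟨n, rfl⟩ : ∃ n, k = n + 1 := ⟨k - 1, by omega⟩
  have hdel := hδ (n+1) (by omega)
  have hdel' : δ * ((n:ℝ)+1) ≤ ‖((n:ℂ)+1) - lam‖ := by
    have h1 : ((n+1 : ℕ) : ℂ) = (n : ℂ) + 1 := by push_cast; ring
    have h2 : δ * ((n:ℝ)+1) = δ * ((n+1 : ℕ) : ℝ) := by push_cast; ring
    rw [← h1, h2]; exact hdel
  have hδn : (0:ℝ) < δ * ((n:ℝ)+1) := by positivity
  have hinv : ‖(((n:ℂ)+1) - lam)⁻¹‖ ≤ (δ * ((n:ℝ)+1))⁻¹ := by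
    rw [norm_inv]
    exact inv_anti₀ hδn hdel'
  have hc0 : c 0 = 1 := by rw [hc, odeC]
  have hstep : ‖c (n+1)‖ ≤ (δ*((n:ℝ)+1))⁻¹ *
      ‖d₁ * c n + (if n = 0 then d₃ else d₂ * c (n-1)) + (if n = 1 then d₄ else 0)
        - ∑ j ∈ Finset.range n, ((n - j : ℕ) : ℂ) * c (j + 1) * c (n - j)‖ := by
    rw [hc, odeC_succ, norm_mul]
    exact mul_le_mul_of_nonneg_right hinv (norm_nonneg _)
  rcases Nat.lt_or_ge n 2 with hn2 | hn2
  · interval_cases n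
    · -- k = 1
      have hb : ‖d₁ * c 0 + (if (0:ℕ) = 0 then d₃ else d₂ * c (0-1)) + (if (0:ℕ) = 1 then d₄ else 0)
          - ∑ j ∈ Finset.range 0, ((0 - j : ℕ) : ℂ) * c (j + 1) * c (0 - j)‖ ≤ ‖d₁‖ + ‖d₃‖ := by
        simp only [if_pos rfl, if_neg (by norm_num : (0:ℕ) ≠ 1), Finset.range_zero,
          Finset.sum_empty, sub_zero, add_zero, hc0, mul_one]
        exact norm_add_le _ _
      have goal_eq : M * r ^ (0+1) / ((0+1 : ℕ) : ℝ)^2 = M*r := by norm_num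
      rw [goal_eq]
      calc ‖c (0+1)‖ ≤ (δ*(((0:ℕ):ℝ)+1))⁻¹ * ‖d₁ * c 0 + (if (0:ℕ) = 0 then d₃ else d₂ * c (0-1))
            + (if (0:ℕ) = 1 then d₄ else 0)
            - ∑ j ∈ Finset.range 0, ((0 - j : ℕ) : ℂ) * c (j + 1) * c (0 - j)‖ := hstep
        _ ≤ (δ*(((0:ℕ):ℝ)+1))⁻¹ * (‖d₁‖+‖d₃‖) :=
            mul_le_mul_of_nonneg_left hb (by positivity)
        _ = δ⁻¹ * (‖d₁‖+‖d₃‖) := by norm_num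
        _ ≤ M*r := by
            rw [inv_mul_le_iff₀ hδ0, show δ*(M*r) = δ*M*r from by ring]
            exact hrA
    · -- k = 2
      have hone : ‖c 1‖ ≤ M * r := by
        have h := ih 1 (by omega) (by omega)
        have e : M * r ^ 1 / ((1:ℕ):ℝ)^2 = M * r := by norm_num
        rw [e] at h
        exact h
      have hsum1 : ∑ j ∈ Finset.range 1, ((1 - j : ℕ) : ℂ) * c (j + 1) * c (1 - j)
          = c 1 * c 1 := by
        rw [Finset.sum_range_one]
        norm_num
      have hb : ‖d₁ * c 1 + (if (1:ℕ) = 0 then d₃ else d₂ * c (1-1)) + (if (1:ℕ) = 1 then d₄ else 0)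
          - ∑ j ∈ Finset.range 1, ((1 - j : ℕ) : ℂ) * c (j + 1) * c (1 - j)‖
          ≤ ‖d₁‖*(M*r) + ‖d₂‖ + ‖d₄‖ + (M*r)*(M*r) := by
        rw [hsum1]
        simp only [if_neg (by norm_num : (1:ℕ) ≠ 0), if_pos rfl, show (1:ℕ)-1 = 0 from rfl, hc0,
          mul_one]
        have h1 : ‖d₁ * c 1 + d₂ + d₄ - c 1 * c 1‖ ≤ ‖d₁ * c 1‖ + ‖d₂‖ + ‖d₄‖ + ‖c 1 * c 1‖ := by
          calc ‖d₁ * c 1 + d₂ + d₄ - c 1 * c 1‖ ≤ ‖d₁ * c 1 + d₂ + d₄‖ + ‖c 1 * c 1‖ :=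
                norm_sub_le _ _
            _ ≤ (‖d₁ * c 1 + d₂‖ + ‖d₄‖) + ‖c 1 * c 1‖ := by
                gcongr; exact norm_add_le _ _
            _ ≤ ((‖d₁ * c 1‖ + ‖d₂‖) + ‖d₄‖) + ‖c 1 * c 1‖ := by
                gcongr; exact norm_add_le _ _
        refine h1.trans ?_
        rw [norm_mul, norm_mul]
        have hc1nn : (0:ℝ) ≤ ‖c 1‖ := norm_nonneg _
        have h2 : ‖c 1‖ * ‖c 1‖ ≤ (M*r)*(M*r) := mul_le_mul hone hone hc1nn (by positivity)
        have h3 : ‖d₁‖ * ‖c 1‖ ≤ ‖d₁‖*(M*r) := mul_le_mul_of_nonneg_left hone (norm_nonneg d₁)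
        linarith
      have key : ‖d₁‖*(M*r) + ‖d₂‖ + ‖d₄‖ + (M*r)*(M*r) ≤ δ*M*r^2/2 := by
        have q1 : ‖d₁‖*(M*r) ≤ δ*M*r^2/8 :=
          by nlinarith [mul_le_mul_of_nonneg_right hrB (mul_nonneg hM0.le hr0.le)]
        have q2 : ‖d₂‖ + ‖d₄‖ ≤ δ*M*r^2/8 := by
          have h4 : δ*M*r*1 ≤ δ*M*r*r :=
            mul_le_mul_of_nonneg_left hr1 (by positivity)
          nlinarith [hrD]
        have q3 : (M*r)*(M*r) ≤ δ*M*r^2/4 := by nlinarith [hMδ, sq_nonneg (M*r), sq_nonneg r, mul_pos hM0 hM0, mul_pos (mul_pos hM0 hM0) (mul_pos hr0 hr0)]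
        linarith
      have goal_eq : M * r ^ (1+1) / ((1+1 : ℕ) : ℝ)^2 = M*r^2/4 := by norm_num
      rw [goal_eq]
      calc ‖c (1+1)‖ ≤ (δ*(((1:ℕ):ℝ)+1))⁻¹ *
            ‖d₁ * c 1 + (if (1:ℕ) = 0 then d₃ else d₂ * c (1-1)) + (if (1:ℕ) = 1 then d₄ else 0)
            - ∑ j ∈ Finset.range 1, ((1 - j : ℕ) : ℂ) * c (j + 1) * c (1 - j)‖ := hstep
        _ ≤ (δ*(((1:ℕ):ℝ)+1))⁻¹ * (‖d₁‖*(M*r) + ‖d₂‖ + ‖d₄‖ + (M*r)*(M*r)) :=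
            mul_le_mul_of_nonneg_left hb (by positivity)
        _ ≤ (δ*(((1:ℕ):ℝ)+1))⁻¹ * (δ*M*r^2/2) :=
            mul_le_mul_of_nonneg_left key (by positivity)
        _ = M*r^2/4 := by
            rw [show ((1:ℕ):ℝ) + 1 = 2 from by norm_num]
            field_simp
            ring
  · -- general case n ≥ 2
    have hN2 : (2:ℝ) ≤ (n:ℝ) := by exact_mod_cast hn2
    have hcastm : ((n-1:ℕ):ℝ) = (n:ℝ)-1 := by
      rw [Nat.cast_sub (by omega)]; norm_num
    have hEpos : (0:ℝ) < r^(n-1) := by positivity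
    have hE1 : (1:ℝ) ≤ r^(n-1) := one_le_pow₀ hr1
    have hpow1 : r^n = r^(n-1)*r := by
      rw [← pow_succ]; congr 1; omega
    have hpow2 : r^(n+1) = r^(n-1)*r^2 := by
      rw [← pow_add]; congr 1; omega
    have hcn : ‖c n‖ ≤ M * r^n / (n:ℝ)^2 := ih n (by omega) (by omega)
    have hcn1 : ‖c (n-1)‖ ≤ M * r^(n-1) / ((n:ℝ)-1)^2 := by
      have h := ih (n-1) (by omega) (by omega)
      rwa [hcastm] at h
    have hterm : ∀ j ∈ Finset.range n, ‖((n-j:ℕ):ℂ) * c (j+1) * c (n-j)‖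
        ≤ M*M*r^(n+1) * ((2/((n:ℝ)+1)) * (1/((j:ℝ)+1)^2 + 1/(((n-j:ℕ)):ℝ)^2)) := by
      intro j hj
      rw [Finset.mem_range] at hj
      have b1 : ‖c (j+1)‖ ≤ M*r^(j+1)/((j+1:ℕ):ℝ)^2 := ih (j+1) (by omega) (by omega)
      have b2 : ‖c (n-j)‖ ≤ M*r^(n-j)/((n-j:ℕ):ℝ)^2 := ih (n-j) (by omega) (by omega)
      have hA0 : (0:ℝ) < ((j+1:ℕ):ℝ) := by positivity
      have hB0 : (0:ℝ) < ((n-j:ℕ):ℝ) := by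
        have : (1:ℕ) ≤ n - j := by omega
        exact_mod_cast Nat.lt_of_lt_of_le Nat.zero_lt_one this
      rw [norm_mul, norm_mul, Complex.norm_natCast]
      have step1 : ((n-j:ℕ):ℝ) * ‖c (j+1)‖ * ‖c (n-j)‖
          ≤ ((n-j:ℕ):ℝ) * (M*r^(j+1)/((j+1:ℕ):ℝ)^2) * (M*r^(n-j)/((n-j:ℕ):ℝ)^2) := by
        apply mul_le_mul _ b2 (norm_nonneg _) (by positivity)
        exact mul_le_mul_of_nonneg_left b1 hB0.le
      refine step1.trans ?_
      have epow : r^(j+1) * r^(n-j) = r^(n+1) := by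
        rw [← pow_add]; congr 1; omega
      have e2 : ((n-j:ℕ):ℝ) * (M*r^(j+1)/((j+1:ℕ):ℝ)^2) * (M*r^(n-j)/((n-j:ℕ):ℝ)^2)
          = M*M*r^(n+1) * (((n-j:ℕ):ℝ)/(((j+1:ℕ):ℝ)^2*((n-j:ℕ):ℝ)^2)) := by
        rw [← epow]; ring
      rw [e2]
      apply mul_le_mul_of_nonneg_left _ (by positivity)
      have hAB : ((j+1:ℕ):ℝ) + ((n-j:ℕ):ℝ) = (n:ℝ)+1 := by
        have h : (j+1) + (n-j) = n+1 := by omega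
        have := congrArg (fun m : ℕ => (m:ℝ)) h
        push_cast at this ⊢
        linarith
      have htb := tbound (j+1) (n-j) (by omega) (by omega)
      rw [hAB] at htb
      have eA : ((j+1:ℕ):ℝ) = (j:ℝ)+1 := by push_cast; ring
      rw [eA] at htb ⊢
      exact htb
    have hsumle : ‖∑ j ∈ Finset.range n, ((n-j:ℕ):ℂ) * c (j+1) * c (n-j)‖
        ≤ 8*(M*M)*(r^(n-1)*r^2)/((n:ℝ)+1) := by
      calc ‖∑ j ∈ Finset.range n, ((n-j:ℕ):ℂ) * c (j+1) * c (n-j)‖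
          ≤ ∑ j ∈ Finset.range n, ‖((n-j:ℕ):ℂ) * c (j+1) * c (n-j)‖ :=
            norm_sum_le _ _
        _ ≤ ∑ j ∈ Finset.range n,
              M*M*r^(n+1) * ((2/((n:ℝ)+1)) * (1/((j:ℝ)+1)^2 + 1/(((n-j:ℕ)):ℝ)^2)) :=
            Finset.sum_le_sum hterm
        _ = M*M*r^(n+1) * ((2/((n:ℝ)+1)) *
              ((∑ j ∈ Finset.range n, 1/((j:ℝ)+1)^2)
                + ∑ j ∈ Finset.range n, 1/(((n-j:ℕ)):ℝ)^2)) := by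
            rw [← Finset.mul_sum, ← Finset.mul_sum, Finset.sum_add_distrib]
        _ ≤ M*M*r^(n+1) * ((2/((n:ℝ)+1)) * (2+2)) := by
            have hss := add_le_add (sum_inv_sq_le n) (sum_inv_sq_reflect n)
            apply mul_le_mul_of_nonneg_left _ (by positivity)
            apply mul_le_mul_of_nonneg_left hss (by positivity)
        _ = 8*(M*M)*(r^(n-1)*r^2)/((n:ℝ)+1) := by
            rw [hpow2]; ring
    have hb : ‖d₁ * c n + (if n = 0 then d₃ else d₂ * c (n-1)) + (if n = 1 then d₄ else 0)
        - ∑ j ∈ Finset.range n, ((n - j : ℕ) : ℂ) * c (j + 1) * c (n - j)‖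
        ≤ ‖d₁‖*(M*(r^(n-1)*r)/(n:ℝ)^2) + ‖d₂‖*(M*r^(n-1)/((n:ℝ)-1)^2)
          + 8*(M*M)*(r^(n-1)*r^2)/((n:ℝ)+1) := by
      rw [if_neg (by omega : ¬ n = 0), if_neg (by omega : ¬ n = 1), add_zero]
      calc ‖d₁ * c n + d₂ * c (n-1)
            - ∑ j ∈ Finset.range n, ((n - j : ℕ) : ℂ) * c (j + 1) * c (n - j)‖
          ≤ ‖d₁ * c n + d₂ * c (n-1)‖
            + ‖∑ j ∈ Finset.range n, ((n - j : ℕ) : ℂ) * c (j + 1) * c (n - j)‖ :=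
            norm_sub_le _ _
        _ ≤ (‖d₁ * c n‖ + ‖d₂ * c (n-1)‖)
            + ‖∑ j ∈ Finset.range n, ((n - j : ℕ) : ℂ) * c (j + 1) * c (n - j)‖ := by
            gcongr
            exact norm_add_le _ _
        _ ≤ ‖d₁‖*(M*(r^(n-1)*r)/(n:ℝ)^2) + ‖d₂‖*(M*r^(n-1)/((n:ℝ)-1)^2)
            + 8*(M*M)*(r^(n-1)*r^2)/((n:ℝ)+1) := by
            have t1 : ‖d₁ * c n‖ ≤ ‖d₁‖*(M*(r^(n-1)*r)/(n:ℝ)^2) := by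
              rw [norm_mul, ← hpow1]
              exact mul_le_mul_of_nonneg_left hcn (norm_nonneg _)
            have t2 : ‖d₂ * c (n-1)‖ ≤ ‖d₂‖*(M*r^(n-1)/((n:ℝ)-1)^2) := by
              rw [norm_mul]
              exact mul_le_mul_of_nonneg_left hcn1 (norm_nonneg _)
            linarith [hsumle]
    have hbig := bigstep ‖d₁‖ ‖d₂‖ δ M (r^(n-1)) r (n:ℝ) hδ0 hM0 hMδ hE1 hr1 hN2
      (norm_nonneg _) (norm_nonneg _) hrB hrC
    calc ‖c (n+1)‖ ≤ (δ*((n:ℝ)+1))⁻¹ *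
          ‖d₁ * c n + (if n = 0 then d₃ else d₂ * c (n-1)) + (if n = 1 then d₄ else 0)
            - ∑ j ∈ Finset.range n, ((n - j : ℕ) : ℂ) * c (j + 1) * c (n - j)‖ := hstep
      _ ≤ (δ*((n:ℝ)+1))⁻¹ * (‖d₁‖*(M*(r^(n-1)*r)/(n:ℝ)^2) + ‖d₂‖*(M*r^(n-1)/((n:ℝ)-1)^2)
            + 8*(M*M)*(r^(n-1)*r^2)/((n:ℝ)+1)) :=
          mul_le_mul_of_nonneg_left hb (by positivity)
      _ ≤ (δ*((n:ℝ)+1))⁻¹ * (δ*((n:ℝ)+1)*(M*(r^(n-1)*r^2)/((n:ℝ)+1)^2)) :=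
          mul_le_mul_of_nonneg_left hbig (by positivity)
      _ = M * r^(n+1) / ((n+1:ℕ):ℝ)^2 := by
          rw [← mul_assoc, inv_mul_cancel₀ (ne_of_gt hδn), one_mul, hpow2]
          push_cast
          ring

open Metric Filter

set_option maxHeartbeats 1000000 in
theorem stmt_14 (lam d₁ d₂ d₃ d₄ : ℂ) (hlam : ∀ n : ℕ, lam ≠ (n : ℂ)) :
    ∃ r : ℝ, 0 < r ∧ ∃ h : ℂ → ℂ,
      AnalyticOnNhd ℂ h (Metric.ball (0:ℂ) r) ∧ h 0 = 1 ∧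
      (∀ ξ ∈ Metric.ball (0:ℂ) r, ξ ≠ 0 →
        h ξ * deriv h ξ = (lam / ξ + d₁ + d₂ * ξ) * h ξ + (-lam / ξ + d₃ + d₄ * ξ)) ∧
      ∀ (h' : ℂ → ℂ) (r' : ℝ), 0 < r' →
        AnalyticOnNhd ℂ h' (Metric.ball (0:ℂ) r') → h' 0 = 1 →
        (∀ ξ ∈ Metric.ball (0:ℂ) r', ξ ≠ 0 →
          h' ξ * deriv h' ξ = (lam / ξ + d₁ + d₂ * ξ) * h' ξ + (-lam / ξ + d₃ + d₄ * ξ)) →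
        h' =ᶠ[nhds 0] h := by
  classical
  obtain ⟨M, R, hM0, hM1, hR1, hbound⟩ := odeC_norm_bound lam d₁ d₂ d₃ d₄ hlam
  set c := odeC lam d₁ d₂ d₃ d₄ with hc
  have hR0 : (0:ℝ) < R := lt_of_lt_of_le one_pos hR1
  have hc0 : c 0 = 1 := by rw [hc, odeC]
  have hgeom : ∀ n : ℕ, ‖c n‖ ≤ R^n := by
    intro n
    match n with
    | 0 => simp [hc0]
    | (n+1) =>
      have h1 := hbound (n+1) (by omega)
      have h2 : (1:ℝ) ≤ ((n+1:ℕ):ℝ)^2 := by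
        have : (1:ℝ) ≤ ((n+1:ℕ):ℝ) := by exact_mod_cast Nat.one_le_iff_ne_zero.mpr (by omega)
        nlinarith
      have h3 : M * R^(n+1) / ((n+1:ℕ):ℝ)^2 ≤ M * R^(n+1) :=
        div_le_self (by positivity) h2
      have h4 : M * R^(n+1) ≤ R^(n+1) := by
        nlinarith [pow_pos hR0 (n+1)]
      linarith
  set ρ : ℝ := 1/(2*R) with hρ
  have hρ0 : 0 < ρ := by rw [hρ]; positivity
  have hRρ : R * ρ = 1/2 := by rw [hρ]; field_simp
  set h : ℂ → ℂ := fun ξ => ∑' n : ℕ, c n * ξ^n with hdefh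
  set g : ℂ → ℂ := fun ξ => ∑' n : ℕ, ((n:ℂ)+1) * c (n+1) * ξ^n with hdefg
  -- summability basics
  have hqlt : ∀ ξ : ℂ, ‖ξ‖ < ρ → R * ‖ξ‖ < 1/2 := by
    intro ξ hξ
    calc R * ‖ξ‖ < R * ρ := by
          apply mul_lt_mul_of_pos_left hξ hR0
      _ = 1/2 := hRρ
  have hS1 : ∀ ξ : ℂ, ‖ξ‖ < ρ → Summable (fun n => ‖c n * ξ^n‖) := by
    intro ξ hξ
    apply Summable.of_nonneg_of_le (fun n => norm_nonneg _) (fun n => ?_)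
      (summable_geometric_of_lt_one (by positivity) (lt_trans (hqlt ξ hξ) (by norm_num)))
    rw [norm_mul, norm_pow, mul_pow]
    exact mul_le_mul_of_nonneg_right (hgeom n) (by positivity)
  have hS1' : ∀ ξ : ℂ, ‖ξ‖ < ρ → Summable (fun n => c n * ξ^n) :=
    fun ξ hξ => (hS1 ξ hξ).of_norm
  have hpoly : Summable (fun n : ℕ => ((n:ℝ)+1)*(1/2)^n) := by
    have h1 := summable_pow_mul_geometric_of_norm_lt_one (R := ℝ) 1
      (r := (1/2:ℝ)) (by rw [Real.norm_eq_abs, abs_of_pos (by norm_num : (0:ℝ) < 1/2)]; norm_num)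
    have h2 := summable_geometric_of_lt_one (r := (1/2:ℝ)) (by norm_num) (by norm_num)
    exact ((h1.add h2).congr (fun n => by push_cast; ring))
  have hS2 : ∀ ξ : ℂ, ‖ξ‖ < ρ → Summable (fun n : ℕ => ‖((n:ℂ)+1) * c (n+1) * ξ^n‖) := by
    intro ξ hξ
    apply Summable.of_nonneg_of_le (fun n => norm_nonneg _) (fun n => ?_)
      ((hpoly.mul_left R).congr (fun n => rfl))
    rw [norm_mul, norm_mul, norm_pow]
    have e1 : ‖(n:ℂ)+1‖ = (n:ℝ)+1 := by
      rw [show ((n:ℂ)+1) = ((n+1:ℕ):ℂ) from by push_cast; ring, Complex.norm_natCast]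
      push_cast; ring
    rw [e1]
    have b1 : ‖c (n+1)‖ * ‖ξ‖^n ≤ R * (1/2)^n := by
      have h1 : ‖c (n+1)‖ * ‖ξ‖^n ≤ R^(n+1) * ‖ξ‖^n :=
        mul_le_mul_of_nonneg_right (hgeom (n+1)) (by positivity)
      have h2 : R^(n+1) * ‖ξ‖^n = R * (R*‖ξ‖)^n := by rw [pow_succ, mul_pow]; ring
      have h3 : (R*‖ξ‖)^n ≤ (1/2)^n := by
        apply pow_le_pow_left₀ (by positivity) (hqlt ξ hξ).le
      rw [h2] at h1
      calc ‖c (n+1)‖ * ‖ξ‖^n ≤ R * (R*‖ξ‖)^n := h1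
        _ ≤ R * (1/2)^n := mul_le_mul_of_nonneg_left h3 hR0.le
    calc ((n:ℝ)+1) * ‖c (n+1)‖ * ‖ξ‖^n = ((n:ℝ)+1) * (‖c (n+1)‖ * ‖ξ‖^n) := by ring
      _ ≤ ((n:ℝ)+1) * (R * (1/2)^n) := by
          apply mul_le_mul_of_nonneg_left b1 (by positivity)
      _ = R * (((n:ℝ)+1)*(1/2)^n) := by ring
  have hS2' : ∀ ξ : ℂ, ‖ξ‖ < ρ → Summable (fun n : ℕ => ((n:ℂ)+1) * c (n+1) * ξ^n) :=
    fun ξ hξ => (hS2 ξ hξ).of_norm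
  -- analyticity
  have hanal : AnalyticOnNhd ℂ h (Metric.ball (0:ℂ) ρ) := by
    set p := FormalMultilinearSeries.ofScalars ℂ c with hp
    have hrad : ENNReal.ofReal ρ ≤ p.radius := by
      rw [show ENNReal.ofReal ρ = (ρ.toNNReal : ENNReal) from rfl]
      apply FormalMultilinearSeries.le_radius_of_bound _ 1 (r := ρ.toNNReal)
      intro n
      rw [hp, FormalMultilinearSeries.ofScalars_norm, Real.coe_toNNReal ρ hρ0.le]
      calc ‖c n‖ * ρ^n ≤ R^n * ρ^n :=
            mul_le_mul_of_nonneg_right (hgeom n) (by positivity)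
        _ = (R*ρ)^n := (mul_pow _ _ _).symm
        _ = (1/2)^n := by rw [hRρ]
        _ ≤ 1 := by
            apply pow_le_one₀ (by norm_num) (by norm_num)
    have hps : HasFPowerSeriesOnBall h p 0 (ENNReal.ofReal ρ) := by
      refine ⟨hrad, by simp [ENNReal.ofReal_pos, hρ0], ?_⟩
      intro y hy
      rw [show Metric.eball (0:ℂ) (ENNReal.ofReal ρ) = Metric.ball 0 ρ from Metric.emetric_ball]
        at hy
      have hy' : ‖y‖ < ρ := mem_ball_zero_iff.mp hy
      have hsum := (hS1' y hy').hasSum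
      rw [zero_add]
      have hfe : (fun n => p n fun _ => y) = fun n : ℕ => c n * y^n := by
        funext n
        rw [hp, FormalMultilinearSeries.ofScalars_apply_eq, smul_eq_mul]
      rw [hfe]
      exact hsum
    rw [show Metric.ball (0:ℂ) ρ = Metric.eball 0 (ENNReal.ofReal ρ) from Metric.emetric_ball.symm]
    exact hps.analyticOnNhd
  -- value at 0
  have h0 : h 0 = 1 := by
    rw [hdefh]
    simp only
    rw [tsum_eq_single 0 (fun n hn => by simp [zero_pow hn])]
    simp [hc0]
  -- derivative
  have hderiv : ∀ ξ ∈ Metric.ball (0:ℂ) ρ, HasDerivAt h (g ξ) ξ := by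
    intro ξ hξ
    have hξ' : ‖ξ‖ < ρ := mem_ball_zero_iff.mp hξ
    have hu : Summable (fun n : ℕ => 2*R*((n:ℝ)*(1/2)^n)) := by
      have h1 := summable_pow_mul_geometric_of_norm_lt_one (R := ℝ) 1
        (r := (1/2:ℝ)) (by rw [Real.norm_eq_abs, abs_of_pos (by norm_num : (0:ℝ) < 1/2)]; norm_num)
      exact (h1.mul_left (2*R)).congr (fun n => by rw [pow_one])
    have hbnd : ∀ (n : ℕ) (y : ℂ), y ∈ Metric.ball (0:ℂ) ρ →
        ‖c n * ((n:ℂ) * y^(n-1))‖ ≤ 2*R*((n:ℝ)*(1/2)^n) := by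
      intro n y hy
      have hy' : ‖y‖ < ρ := mem_ball_zero_iff.mp hy
      match n with
      | 0 => simp
      | (n+1) =>
        rw [norm_mul, norm_mul, norm_pow, Complex.norm_natCast]
        have e1 : (n+1) - 1 = n := by omega
        rw [e1]
        have b0 : ‖y‖^n ≤ ρ^n := pow_le_pow_left₀ (norm_nonneg _) hy'.le n
        have b1 : ‖c (n+1)‖ * (((n+1:ℕ):ℝ) * ‖y‖^n) ≤ R^(n+1) * (((n+1:ℕ):ℝ) * ρ^n) := by
          apply mul_le_mul (hgeom (n+1)) _ (by positivity) (by positivity)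
          exact mul_le_mul_of_nonneg_left b0 (by positivity)
        refine b1.trans ?_
        have e2 : R^(n+1) * (((n+1:ℕ):ℝ) * ρ^n) = ((n+1:ℕ):ℝ) * (R * (R*ρ)^n) := by
          rw [mul_pow, pow_succ]; ring
        rw [e2, hRρ]
        have e3 : 2*R*(((n+1:ℕ):ℝ)*(1/2)^(n+1)) = ((n+1:ℕ):ℝ) * (R * (1/2)^n) := by
          rw [pow_succ]; ring
        rw [e3]
    have hder := hasDerivAt_tsum_of_isPreconnected hu Metric.isOpen_ball
      (convex_ball (0:ℂ) ρ).isPreconnected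
      (fun n y _ => (hasDerivAt_pow n y).const_mul (c n))
      hbnd (mem_ball_self hρ0) (hS1' 0 (by simpa using hρ0)) hξ
    have hsum' : Summable (fun n : ℕ => c n * ((n:ℂ) * ξ^(n-1))) := by
      apply Summable.of_norm_bounded hu (fun n => hbnd n ξ hξ)
    have heq : ∑' n : ℕ, c n * ((n:ℂ) * ξ^(n-1)) = g ξ := by
      rw [Summable.tsum_eq_zero_add hsum']
      have e0 : c 0 * ((0:ℂ) * ξ^(0-1)) = 0 := by simp
      rw [show ((0:ℕ):ℂ) = (0:ℂ) from by norm_num] at *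
      rw [hdefg]
      simp only [Nat.cast_zero, zero_mul, mul_zero, zero_add]
      apply tsum_congr
      intro n
      have e1 : (n+1) - 1 = n := by omega
      rw [e1]
      push_cast
      ring
    rw [← heq]
    exact hder
  have hderiv' : ∀ ξ ∈ Metric.ball (0:ℂ) ρ, deriv h ξ = g ξ :=
    fun ξ hξ => (hderiv ξ hξ).deriv
  -- key identity
  have KI : ∀ ξ ∈ Metric.ball (0:ℂ) ρ, ξ * (h ξ * g ξ)
      = lam * (h ξ - 1) + (d₁*ξ + d₂*ξ^2) * h ξ + d₃*ξ + d₄*ξ^2 := by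
    intro ξ hξ
    have hξ' : ‖ξ‖ < ρ := mem_ball_zero_iff.mp hξ
    have hq0 : (0:ℝ) ≤ R*‖ξ‖ := by positivity
    have hq1 : R*‖ξ‖ < 1 := lt_trans (hqlt ξ hξ') (by norm_num)
    have hgeo : Summable (fun n : ℕ => (R*‖ξ‖)^n) := summable_geometric_of_lt_one hq0 hq1
    have hgen : ∀ (a : ℕ → ℂ) (C : ℝ), (∀ n, ‖a n‖ ≤ C * (R*‖ξ‖)^n) → Summable a := by
      intro a C hb
      exact Summable.of_norm
        (Summable.of_nonneg_of_le (fun n => norm_nonneg _) hb (hgeo.mul_left C))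
    -- Cauchy product
    have hmul : h ξ * g ξ = ∑' n : ℕ,
        (lam * c (n+1) + d₁ * c n + (if n = 0 then d₃ else d₂ * c (n-1))
          + (if n = 1 then d₄ else 0)) * ξ^n := by
      rw [hdefh, hdefg]
      simp only
      rw [tsum_mul_tsum_eq_tsum_sum_antidiagonal_of_summable_norm (hS1 ξ hξ') (hS2 ξ hξ')]
      apply tsum_congr
      intro n
      rw [← odeC_conv lam d₁ d₂ d₃ d₄ hlam n, Finset.sum_mul]
      apply Finset.sum_congr rfl
      intro q hq
      have hq' : q.1 + q.2 = n := Finset.HasAntidiagonal.mem_antidiagonal.mp hq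
      rw [← hq', pow_add]
      ring
    -- summability of pieces
    have s1 : Summable (fun n : ℕ => lam * c (n+1) * ξ^(n+1)) := by
      apply hgen _ (‖lam‖*(R*‖ξ‖))
      intro n
      rw [norm_mul, norm_mul, norm_pow]
      calc ‖lam‖ * ‖c (n+1)‖ * ‖ξ‖^(n+1) ≤ ‖lam‖ * R^(n+1) * ‖ξ‖^(n+1) := by
            apply mul_le_mul_of_nonneg_right _ (by positivity)
            exact mul_le_mul_of_nonneg_left (hgeom (n+1)) (norm_nonneg _)
        _ = ‖lam‖*(R*‖ξ‖) * (R*‖ξ‖)^n := by rw [mul_pow, pow_succ, pow_succ]; ring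
    have s2 : Summable (fun n : ℕ => d₁ * c n * ξ^(n+1)) := by
      apply hgen _ (‖d₁‖*‖ξ‖)
      intro n
      rw [norm_mul, norm_mul, norm_pow]
      calc ‖d₁‖ * ‖c n‖ * ‖ξ‖^(n+1) ≤ ‖d₁‖ * R^n * ‖ξ‖^(n+1) := by
            apply mul_le_mul_of_nonneg_right _ (by positivity)
            exact mul_le_mul_of_nonneg_left (hgeom n) (norm_nonneg _)
        _ = ‖d₁‖*‖ξ‖ * (R*‖ξ‖)^n := by rw [mul_pow, pow_succ]; ring
    have s3 : Summable (fun n : ℕ => (if n = 0 then d₃ else d₂ * c (n-1)) * ξ^(n+1)) := by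
      apply hgen _ ((‖d₃‖+‖d₂‖)*‖ξ‖)
      intro n
      match n with
      | 0 =>
        have e : (if (0:ℕ) = 0 then d₃ else d₂ * c (0-1)) = d₃ := if_pos rfl
        rw [e, norm_mul, norm_pow, show ((0:ℕ)+1) = 1 from rfl, pow_one, pow_zero, mul_one]
        nlinarith [norm_nonneg d₃, norm_nonneg ξ, mul_nonneg (norm_nonneg d₂) (norm_nonneg ξ)]
      | (n+1) =>
        rw [if_neg (by omega : ¬ n+1 = 0), norm_mul, norm_mul, norm_pow]
        have e1 : (n+1) - 1 = n := by omega
        rw [e1]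
        have b1 : ‖c n‖ * ‖ξ‖^(n+1+1) ≤ R^n * ‖ξ‖^(n+1) * ‖ξ‖ := by
          rw [show (n+1+1) = (n+1)+1 from rfl, pow_succ, ← mul_assoc]
          apply mul_le_mul_of_nonneg_right _ (norm_nonneg _)
          exact mul_le_mul_of_nonneg_right (hgeom n) (by positivity)
        calc ‖d₂‖ * ‖c n‖ * ‖ξ‖^(n+1+1) ≤ ‖d₂‖ * (R^n * ‖ξ‖^(n+1) * ‖ξ‖) := by
              rw [mul_assoc]
              exact mul_le_mul_of_nonneg_left b1 (norm_nonneg _)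
          _ ≤ ‖d₂‖ * (R^(n+1) * ‖ξ‖^(n+1) * ‖ξ‖) := by
              apply mul_le_mul_of_nonneg_left _ (norm_nonneg _)
              apply mul_le_mul_of_nonneg_right _ (norm_nonneg _)
              apply mul_le_mul_of_nonneg_right _ (by positivity)
              exact pow_le_pow_right₀ hR1 (by omega)
          _ = ‖d₂‖*‖ξ‖ * (R*‖ξ‖)^(n+1) := by rw [mul_pow]; ring
          _ ≤ (‖d₃‖+‖d₂‖)*‖ξ‖ * (R*‖ξ‖)^(n+1) := by
              apply mul_le_mul_of_nonneg_right _ (by positivity)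
              nlinarith [norm_nonneg d₃, norm_nonneg ξ]
    have s4 : Summable (fun n : ℕ => (if n = 1 then d₄ else 0) * ξ^(n+1)) := by
      apply (summable_of_finite_support ?_)
      apply Set.Finite.subset (Set.finite_singleton 1)
      intro n hn
      simp only [Function.mem_support] at hn
      by_contra hne
      simp only [Set.mem_singleton_iff] at hne
      rw [if_neg hne, zero_mul] at hn
      exact hn rfl
    -- main computation
    have hLHS : ξ * (h ξ * g ξ) = (∑' n : ℕ, lam * c (n+1) * ξ^(n+1))
        + (∑' n : ℕ, d₁ * c n * ξ^(n+1))
        + (∑' n : ℕ, (if n = 0 then d₃ else d₂ * c (n-1)) * ξ^(n+1))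
        + (∑' n : ℕ, (if n = 1 then d₄ else 0) * ξ^(n+1)) := by
      rw [hmul, ← tsum_mul_left]
      rw [show (fun n : ℕ => ξ * ((lam * c (n+1) + d₁ * c n + (if n = 0 then d₃ else d₂ * c (n-1))
          + (if n = 1 then d₄ else 0)) * ξ^n))
        = fun n : ℕ => lam * c (n+1) * ξ^(n+1) + d₁ * c n * ξ^(n+1)
          + (if n = 0 then d₃ else d₂ * c (n-1)) * ξ^(n+1)
          + (if n = 1 then d₄ else 0) * ξ^(n+1) from funext fun n => by ring]
      rw [Summable.tsum_add (((s1.add s2).add s3)) s4, Summable.tsum_add (s1.add s2) s3, Summable.tsum_add s1 s2]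
    -- piece 1
    have hpeel : ∑' n : ℕ, c (n+1) * ξ^(n+1) = h ξ - 1 := by
      have := Summable.tsum_eq_zero_add (hS1' ξ hξ')
      rw [hdefh]
      simp only
      rw [this, hc0, pow_zero, one_mul]
      ring
    have T1 : ∑' n : ℕ, lam * c (n+1) * ξ^(n+1) = lam * (h ξ - 1) := by
      rw [show (fun n : ℕ => lam * c (n+1) * ξ^(n+1))
        = fun n : ℕ => lam * (c (n+1) * ξ^(n+1)) from funext fun n => by ring]
      rw [tsum_mul_left, hpeel]
    have T2 : ∑' n : ℕ, d₁ * c n * ξ^(n+1) = d₁ * ξ * h ξ := by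
      rw [show (fun n : ℕ => d₁ * c n * ξ^(n+1))
        = fun n : ℕ => (d₁ * ξ) * (c n * ξ^n) from funext fun n => by ring]
      rw [tsum_mul_left, hdefh]
    have T3 : ∑' n : ℕ, (if n = 0 then d₃ else d₂ * c (n-1)) * ξ^(n+1)
        = d₃ * ξ + d₂ * ξ^2 * h ξ := by
      rw [Summable.tsum_eq_zero_add s3]
      have e1 : (if (0:ℕ) = 0 then d₃ else d₂ * c (0-1)) * ξ^(0+1) = d₃ * ξ := by
        rw [if_pos rfl, pow_one]
      rw [e1]
      congr 1
      rw [show (fun n : ℕ => (if n+1 = 0 then d₃ else d₂ * c (n+1-1)) * ξ^(n+1+1))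
        = fun n : ℕ => (d₂ * ξ^2) * (c n * ξ^n) from funext fun n => by
          rw [if_neg (by omega : ¬ n+1 = 0), show n+1-1 = n from by omega]
          ring]
      rw [tsum_mul_left, hdefh]
    have T4 : ∑' n : ℕ, (if n = 1 then d₄ else 0) * ξ^(n+1) = d₄ * ξ^2 := by
      rw [tsum_eq_single 1 (fun n hn => by rw [if_neg hn, zero_mul])]
      norm_num
    rw [hLHS, T1, T2, T3, T4]
    ring
  -- the ODE
  have hODE : ∀ ξ ∈ Metric.ball (0:ℂ) ρ, ξ ≠ 0 →
      h ξ * deriv h ξ = (lam / ξ + d₁ + d₂ * ξ) * h ξ + (-lam / ξ + d₃ + d₄ * ξ) := by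
    intro ξ hξ hξ0
    rw [hderiv' ξ hξ]
    have hKI := KI ξ hξ
    field_simp
    linear_combination hKI
  refine ⟨ρ, hρ0, h, hanal, h0, hODE, ?_⟩
  -- uniqueness
  intro h' r' hr' Ha' h'0 Hode'
  set ρ₂ : ℝ := min ρ r' with hρ₂
  have hρ₂0 : 0 < ρ₂ := lt_min hρ0 hr'
  have hsub1 : Metric.ball (0:ℂ) ρ₂ ⊆ Metric.ball 0 ρ := ball_subset_ball (min_le_left _ _)
  have hsub2 : Metric.ball (0:ℂ) ρ₂ ⊆ Metric.ball 0 r' := ball_subset_ball (min_le_right _ _)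
  set u : ℂ → ℂ := fun ξ => h' ξ * h' ξ - h ξ * h ξ with hu
  have hu0 : u 0 = 0 := by rw [hu]; simp only; rw [h'0, h0]; ring
  have hud : ∀ ξ ∈ Metric.ball (0:ℂ) ρ₂,
      HasDerivAt u (2*(h' ξ * deriv h' ξ) - 2*(h ξ * deriv h ξ)) ξ := by
    intro ξ hξ
    have H1 : HasDerivAt h' (deriv h' ξ) ξ :=
      ((Ha' ξ (hsub2 hξ)).differentiableAt).hasDerivAt
    have H2 : HasDerivAt h (deriv h ξ) ξ :=
      ((hanal ξ (hsub1 hξ)).differentiableAt).hasDerivAt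
    have := (H1.mul H1).sub (H2.mul H2)
    exact this.congr_deriv (by ring)
  have hEqn : ∀ ξ ∈ Metric.ball (0:ℂ) ρ₂,
      ξ * deriv u ξ * (h' ξ + h ξ) = 2*(lam + d₁*ξ + d₂*ξ^2) * u ξ := by
    intro ξ hξ
    have hdu : deriv u ξ = 2*(h' ξ * deriv h' ξ) - 2*(h ξ * deriv h ξ) := (hud ξ hξ).deriv
    by_cases hξ0 : ξ = 0
    · subst hξ0
      rw [hu0]
      ring
    · have o1 := Hode' ξ (hsub2 hξ) hξ0
      have o2 := hODE ξ (hsub1 hξ) hξ0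
      have ho1' : ξ * (h' ξ * deriv h' ξ)
          = (lam + d₁*ξ + d₂*ξ^2) * h' ξ + (-lam + d₃*ξ + d₄*ξ^2) := by
        rw [o1]
        field_simp
      have ho2' : ξ * (h ξ * deriv h ξ)
          = (lam + d₁*ξ + d₂*ξ^2) * h ξ + (-lam + d₃*ξ + d₄*ξ^2) := by
        rw [o2]
        field_simp
      rw [hdu, hu]
      simp only
      linear_combination (2*(h' ξ + h ξ)) * ho1' - (2*(h ξ + h' ξ)) * ho2'
  have huan : AnalyticAt ℂ u 0 := by
    have a1 : AnalyticAt ℂ h' 0 := Ha' 0 (mem_ball_self hr')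
    have a2 : AnalyticAt ℂ h 0 := hanal 0 (mem_ball_self hρ0)
    exact (a1.mul a1).sub (a2.mul a2)
  by_cases hz : ∀ᶠ ξ in nhds (0:ℂ), u ξ = 0
  · have hcont : ContinuousAt (fun ξ => h' ξ + h ξ) 0 :=
      ((Ha' 0 (mem_ball_self hr')).add (hanal 0 (mem_ball_self hρ0))).continuousAt
    have hval : h' 0 + h 0 ≠ 0 := by rw [h'0, h0]; norm_num
    have hne : ∀ᶠ ξ in nhds (0:ℂ), h' ξ + h ξ ≠ 0 := hcont.eventually_ne hval
    filter_upwards [hz, hne] with ξ h1 h2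
    have h3 : (h' ξ - h ξ) * (h' ξ + h ξ) = 0 := by
      have : h' ξ * h' ξ - h ξ * h ξ = 0 := h1
      linear_combination this
    rcases mul_eq_zero.mp h3 with h4 | h4
    · exact sub_eq_zero.mp h4
    · exact absurd h4 h2
  · exfalso
    have horder : analyticOrderAt u 0 ≠ ⊤ :=
      fun htop => hz ((analyticOrderAt_eq_top).mp htop)
    obtain ⟨m, hm⟩ := WithTop.ne_top_iff_exists.mp horder
    obtain ⟨g₂, hg₂an, hg₂0, hg₂ev⟩ := (huan.analyticOrderAt_eq_natCast).mp hm.symm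
    have hg₂ev' : ∀ᶠ ξ in nhds (0:ℂ), u ξ = ξ^m * g₂ ξ := by
      filter_upwards [hg₂ev] with ξ e
      rw [e, sub_zero, smul_eq_mul]
    have hm1 : 1 ≤ m := by
      by_contra hcon
      push_neg at hcon
      interval_cases m
      have := hg₂ev'.self_of_nhds
      rw [hu0, pow_zero, one_mul] at this
      exact hg₂0 this.symm
    obtain ⟨pg, rg, hpg⟩ := hg₂an
    have hg'an : AnalyticAt ℂ (deriv g₂) 0 :=
      hpg.analyticOnNhd.deriv 0 (EMetric.mem_ball_self hpg.r_pos)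
    have hg₂an' : AnalyticAt ℂ g₂ 0 := ⟨pg, rg, hpg⟩
    have hder_u : ∀ᶠ ξ in nhds (0:ℂ),
        deriv u ξ = (m:ℂ) * ξ^(m-1) * g₂ ξ + ξ^m * deriv g₂ ξ := by
      have h1 : deriv u =ᶠ[nhds (0:ℂ)] deriv (fun ξ => ξ^m * g₂ ξ) :=
        Filter.EventuallyEq.deriv hg₂ev'
      have h2 : ∀ᶠ ξ in nhds (0:ℂ), AnalyticAt ℂ g₂ ξ := hg₂an'.eventually_analyticAt
      filter_upwards [h1, h2] with ξ e1 e2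
      rw [e1]
      exact ((hasDerivAt_pow m ξ).mul (e2.differentiableAt.hasDerivAt)).deriv
    set Φ : ℂ → ℂ := fun ξ =>
      ((m:ℂ) * g₂ ξ + ξ * deriv g₂ ξ) * (h' ξ + h ξ) - 2*(lam + d₁*ξ + d₂*ξ^2) * g₂ ξ with hΦ
    have hΦ0 : ∀ᶠ ξ in nhdsWithin (0:ℂ) {(0:ℂ)}ᶜ, Φ ξ = 0 := by
      have hball : Metric.ball (0:ℂ) ρ₂ ∈ nhds (0:ℂ) := ball_mem_nhds _ hρ₂0
      rw [eventually_nhdsWithin_iff]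
      filter_upwards [hder_u, hg₂ev', hball] with ξ e1 e2 e3 e4
      have hξ0 : ξ ≠ 0 := e4
      have hE := hEqn ξ e3
      rw [e1, e2] at hE
      have hxm : ξ^m ≠ 0 := pow_ne_zero _ hξ0
      apply mul_left_cancel₀ hxm
      rw [mul_zero, hΦ]
      simp only
      have key : ξ * ξ^(m-1) = ξ^m := by
        rw [← pow_succ']
        congr 1
        omega
      linear_combination hE - ((m:ℂ) * g₂ ξ * (h' ξ + h ξ)) * key
    have hΦcont : ContinuousAt Φ 0 := by
      rw [hΦ]
      apply ContinuousAt.sub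
      · apply ContinuousAt.mul
        · exact (continuousAt_const.mul hg₂an'.continuousAt).add
            (continuousAt_id.mul hg'an.continuousAt)
        · exact ((Ha' 0 (mem_ball_self hr')).continuousAt).add
            ((hanal 0 (mem_ball_self hρ0)).continuousAt)
      · exact (by fun_prop : ContinuousAt (fun x : ℂ => 2*(lam + d₁*x + d₂*x^2)) 0).mul
          hg₂an'.continuousAt
    have hΦ00 : Φ 0 = 0 := by
      have l1 : Filter.Tendsto Φ (nhdsWithin (0:ℂ) {(0:ℂ)}ᶜ) (nhds (Φ 0)) :=
        hΦcont.tendsto.mono_left nhdsWithin_le_nhds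
      have l2 : Filter.Tendsto Φ (nhdsWithin (0:ℂ) {(0:ℂ)}ᶜ) (nhds 0) := by
        rw [Filter.tendsto_congr' hΦ0]
        exact tendsto_const_nhds
      exact tendsto_nhds_unique l1 l2
    have hΦval : Φ 0 = 2 * g₂ 0 * ((m:ℂ) - lam) := by
      rw [hΦ]
      simp only
      rw [h'0, h0]
      ring
    rw [hΦval] at hΦ00
    have hml : (m:ℂ) - lam = 0 := by
      rcases mul_eq_zero.mp hΦ00 with h5 | h5
      · rcases mul_eq_zero.mp h5 with h6 | h6
        · norm_num at h6
        · exact absurd h6 hg₂0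
      · exact h5
    exact hlam m (by linear_combination -hml)
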